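/- Let q be a prime power, a ∣ ℓ, and let W' be an (m−1)-dimensional F_q-subspace of F_{q^ℓ}. Define B = {α₁u + α₂v : u, v ∈ W', u ≠ v, α₁, α₂ ∈ F_{q^a}}. Then |B| ≤ C(q^{m-1}, 2)·((q^a − 1)/(q − 1))^2 + 1. -/

import Mathlib

open Module

/-- for an `(m−1)`-dimensional subspace `W'`, the set
`B = {α₁u + α₂v : u, v ∈ W', u ≠ v, α₁, α₂ ∈ F_{q^a}}` has at most
`C(q^{m-1},2)·((q^a−1)/(q−1))² + 1` elements. -/
theorem stmt7 {K F : Type*} [Field K] [Field F] [Algebra K F] [Fintype K] [Fintype F]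
    (q ℓ a m : ℕ) (hq : Fintype.card K = q) (hℓ : finrank K F = ℓ)
    (ha : a ∣ ℓ) (hm : 1 ≤ m)
    (A : IntermediateField K F) (hA : finrank K A = a)
    (W' : Submodule K F) (hW' : finrank K W' = m - 1) :
    {x : F | ∃ u ∈ W', ∃ v ∈ W', u ≠ v ∧ ∃ α₁ ∈ A, ∃ α₂ ∈ A, x = α₁ * u + α₂ * v}.ncard
      ≤ Nat.choose (q ^ (m - 1)) 2 * ((q ^ a - 1) / (q - 1)) ^ 2 + 1 := by
  classical
  letI : LinearOrder F := LinearOrder.lift' (Fintype.equivFin F) (Fintype.equivFin F).injective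
  -- the subgroup of scalars inside the unit group of A
  set φ : Kˣ →* (↥A)ˣ := Units.map (algebraMap K ↥A : K →* ↥A) with hφ
  have hφinj : Function.Injective φ := Units.map_injective (algebraMap K ↥A).injective
  set H : Subgroup (↥A)ˣ := φ.range with hH
  -- representatives
  set R : Finset F :=
    Finset.univ.image (fun c : (↥A)ˣ ⧸ H => ((((Quotient.out c : (↥A)ˣ) : ↥A)) : F)) with hR
  have hq2 : 2 ≤ q := by
    rw [← hq]; exact Fintype.one_lt_card
  have hcardA : Fintype.card ↥A = q ^ a := by
    rw [card_eq_pow_finrank (K := K) (V := ↥A), hq, hA]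
  have hcardAu : Nat.card (↥A)ˣ = q ^ a - 1 := by
    rw [Nat.card_eq_fintype_card, Fintype.card_units, hcardA]
  have hcardH : Nat.card H = q - 1 := by
    rw [← Nat.card_congr (MonoidHom.ofInjective hφinj).toEquiv, Nat.card_eq_fintype_card,
      Fintype.card_units, hq]
  have hcardQ : Nat.card ((↥A)ˣ ⧸ H) = (q ^ a - 1) / (q - 1) := by
    have := Subgroup.card_eq_card_quotient_mul_card_subgroup H
    rw [hcardAu, hcardH] at this
    rw [this, Nat.mul_div_cancel _ (by omega)]
  have hRcard : R.card ≤ (q ^ a - 1) / (q - 1) := by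
    calc R.card ≤ Finset.univ.card := Finset.card_image_le
    _ = Nat.card ((↥A)ˣ ⧸ H) := by rw [Nat.card_eq_fintype_card, Finset.card_univ]
    _ = _ := hcardQ
  have hRA : ∀ r ∈ R, r ∈ A := by
    intro r hr
    simp only [hR, Finset.mem_image] at hr
    obtain ⟨c, -, rfl⟩ := hr
    exact ((Quotient.out c : (↥A)ˣ) : ↥A).2
  -- every nonzero element of A is a scalar times a representative
  have hrep : ∀ α : F, α ∈ A → α ≠ 0 → ∃ r ∈ R, ∃ τ : Kˣ, α = algebraMap K F τ * r := by
    intro α hα hα0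
    have hα0' : (⟨α, hα⟩ : ↥A) ≠ 0 := by
      intro h; exact hα0 (by simpa using congrArg Subtype.val h)
    set u : (↥A)ˣ := Units.mk0 _ hα0' with hu
    obtain ⟨h, hout⟩ := QuotientGroup.mk_out_eq_mul H u
    obtain ⟨τ, hτ⟩ := h.2
    refine ⟨((Quotient.out (QuotientGroup.mk u : (↥A)ˣ ⧸ H) : (↥A)ˣ) : ↥A),
      Finset.mem_image_of_mem _ (Finset.mem_univ _), τ⁻¹, ?_⟩
    have h2 : ((Quotient.out (QuotientGroup.mk u : (↥A)ˣ ⧸ H) : (↥A)ˣ) : ↥A)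
        = (⟨α, hα⟩ : ↥A) * algebraMap K ↥A (τ : K) := by
      rw [hout, ← hτ]; rfl
    have h3 : (((Quotient.out (QuotientGroup.mk u : (↥A)ˣ ⧸ H) : (↥A)ˣ) : ↥A) : F)
        = α * algebraMap K F (τ : K) := by
      rw [h2]
      push_cast
      rfl
    rw [h3]
    have hτ0 : algebraMap K F (τ : K) ≠ 0 := by
      simp only [ne_eq, map_eq_zero]
      exact τ.ne_zero
    rw [show ((τ⁻¹ : Kˣ) : K) = ((τ : Kˣ) : K)⁻¹ from Units.val_inv_eq_inv_val τ, map_inv₀]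
    field_simp
  -- single-term representation
  have hsingle : ∀ α : F, α ∈ A → ∀ w ∈ W', α * w ≠ 0 →
      ∃ u ∈ W', ∃ v ∈ W', u < v ∧ ∃ r₁ ∈ R, ∃ r₂ ∈ R, α * w = r₁ * u + r₂ * v := by
    intro α hα w hw h0
    have hα0 : α ≠ 0 := fun h => h0 (by rw [h, zero_mul])
    obtain ⟨r, hrR, τ, hτ⟩ := hrep α hα hα0
    have hw' : (τ : K) • w ∈ W' := W'.smul_mem _ hw
    have heq : α * w = r * ((τ : K) • w) := by
      rw [hτ, Algebra.smul_def]; ring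
    have hne : (τ : K) • w ≠ 0 := by
      intro h; rw [heq, h, mul_zero] at h0; exact h0 rfl
    rcases lt_or_gt_of_ne hne with h | h
    · exact ⟨(τ : K) • w, hw', 0, W'.zero_mem, h, r, hrR, r, hrR, by
        rw [heq]; ring⟩
    · exact ⟨0, W'.zero_mem, (τ : K) • w, hw', h, r, hrR, r, hrR, by
        rw [heq]; ring⟩
  -- the main structural claim
  have hmain : ∀ x ∈ {x : F | ∃ u ∈ W', ∃ v ∈ W', u ≠ v ∧ ∃ α₁ ∈ A, ∃ α₂ ∈ A,
      x = α₁ * u + α₂ * v}, x = 0 ∨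
      ∃ u ∈ W', ∃ v ∈ W', u < v ∧ ∃ r₁ ∈ R, ∃ r₂ ∈ R, x = r₁ * u + r₂ * v := by
    rintro x ⟨u, hu, v, hv, huv, α₁, hα₁, α₂, hα₂, rfl⟩
    by_cases hx0 : α₁ * u + α₂ * v = 0
    · exact Or.inl hx0
    right
    by_cases h1 : α₁ = 0
    · have : α₁ * u + α₂ * v = α₂ * v := by rw [h1]; ring
      rw [this] at hx0 ⊢
      exact hsingle α₂ hα₂ v hv hx0
    by_cases h2 : α₂ = 0
    · have : α₁ * u + α₂ * v = α₁ * u := by rw [h2]; ring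
      rw [this] at hx0 ⊢
      exact hsingle α₁ hα₁ u hu hx0
    obtain ⟨r₁, hr₁, τ₁, hτ₁⟩ := hrep α₁ hα₁ h1
    obtain ⟨r₂, hr₂, τ₂, hτ₂⟩ := hrep α₂ hα₂ h2
    have hu' : (τ₁ : K) • u ∈ W' := W'.smul_mem _ hu
    have hv' : (τ₂ : K) • v ∈ W' := W'.smul_mem _ hv
    have heq : α₁ * u + α₂ * v = r₁ * ((τ₁ : K) • u) + r₂ * ((τ₂ : K) • v) := by
      rw [hτ₁, hτ₂, Algebra.smul_def, Algebra.smul_def]; ring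
    by_cases hEq : (τ₁ : K) • u = (τ₂ : K) • v
    · have heq2 : α₁ * u + α₂ * v = (r₁ + r₂) * ((τ₁ : K) • u) := by
        rw [heq, hEq]; ring
      rw [heq2] at hx0 ⊢
      exact hsingle (r₁ + r₂) (A.add_mem (hRA _ hr₁) (hRA _ hr₂)) _ hu' hx0
    rcases lt_or_gt_of_ne hEq with h | h
    · exact ⟨_, hu', _, hv', h, r₁, hr₁, r₂, hr₂, heq⟩
    · exact ⟨_, hv', _, hu', h, r₂, hr₂, r₁, hr₁, by rw [heq]; ring⟩
  -- counting
  set WS : Finset F := Set.toFinset (W' : Set F) with hWS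
  have hWScard : WS.card = q ^ (m - 1) := by
    rw [hWS, Set.toFinset_card]
    rw [show Fintype.card ↥(W' : Set F) = Fintype.card ↥W' from rfl,
      card_eq_pow_finrank (K := K) (V := ↥W'), hq, hW']
  set P : Finset (F × F) := (WS ×ˢ WS).filter (fun p => p.1 < p.2) with hP
  have hPcard : P.card ≤ Nat.choose (q ^ (m - 1)) 2 := by
    have h := Finset.card_le_card_of_injOn (fun p : F × F => ({p.1, p.2} : Finset F))
      (s := P) (t := WS.powersetCard 2) ?_ ?_
    · rwa [Finset.card_powersetCard, hWScard] at h
    · intro p hp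
      simp only [hP, Finset.mem_coe, Finset.mem_filter, Finset.mem_product] at hp
      rw [Finset.mem_coe, Finset.mem_powersetCard]
      constructor
      · intro z hz
        simp only [Finset.mem_insert, Finset.mem_singleton] at hz
        rcases hz with rfl | rfl
        · exact hp.1.1
        · exact hp.1.2
      · rw [Finset.card_insert_of_notMem (by simp [ne_of_lt hp.2]),
          Finset.card_singleton]
    · intro p hp p' hp' hpp'
      simp only [hP, Finset.coe_filter, Set.mem_setOf_eq, Finset.mem_product] at hp hp'
      have : ({p.1, p.2} : Set F) = {p'.1, p'.2} := by
        have := congrArg (fun s : Finset F => (s : Set F)) hpp'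
        simpa using this
      rcases Set.pair_eq_pair_iff.mp this with ⟨h1, h2⟩ | ⟨h1, h2⟩
      · exact Prod.ext h1 h2
      · exfalso
        have := hp.2
        rw [h1, h2] at this
        exact absurd (this.trans hp'.2) (lt_irrefl _)
  set T : Finset F := insert 0 ((P ×ˢ (R ×ˢ R)).image
    (fun p : (F × F) × F × F => p.2.1 * p.1.1 + p.2.2 * p.1.2)) with hT
  have hsub : {x : F | ∃ u ∈ W', ∃ v ∈ W', u ≠ v ∧ ∃ α₁ ∈ A, ∃ α₂ ∈ A,
      x = α₁ * u + α₂ * v} ⊆ ↑T := by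
    intro x hx
    rcases hmain x hx with rfl | ⟨u, hu, v, hv, huv, r₁, hr₁, r₂, hr₂, rfl⟩
    · simp [hT]
    · rw [hT, Finset.coe_insert]
      right
      rw [Finset.mem_coe, Finset.mem_image]
      refine ⟨((u, v), (r₁, r₂)), ?_, rfl⟩
      simp only [Finset.mem_product, hP, Finset.mem_filter]
      exact ⟨⟨⟨by simp [hWS, hu], by simp [hWS, hv]⟩, huv⟩, hr₁, hr₂⟩
  calc {x : F | ∃ u ∈ W', ∃ v ∈ W', u ≠ v ∧ ∃ α₁ ∈ A, ∃ α₂ ∈ A,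
      x = α₁ * u + α₂ * v}.ncard ≤ (↑T : Set F).ncard :=
        Set.ncard_le_ncard hsub T.finite_toSet
    _ = T.card := Set.ncard_coe_finset T
    _ ≤ ((P ×ˢ (R ×ˢ R)).image
        (fun p : (F × F) × F × F => p.2.1 * p.1.1 + p.2.2 * p.1.2)).card + 1 := by
        rw [hT]; exact (Finset.card_insert_le _ _).trans (by omega)
    _ ≤ P.card * (R.card * R.card) + 1 := by
        have := Finset.card_image_le (s := P ×ˢ (R ×ˢ R))
          (f := fun p : (F × F) × F × F => p.2.1 * p.1.1 + p.2.2 * p.1.2)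
        rw [Finset.card_product, Finset.card_product] at this
        omega
    _ ≤ Nat.choose (q ^ (m - 1)) 2 * ((q ^ a - 1) / (q - 1)) ^ 2 + 1 := by
        have : R.card * R.card ≤ ((q ^ a - 1) / (q - 1)) ^ 2 := by
          rw [sq]; exact Nat.mul_le_mul hRcard hRcard
        exact Nat.add_le_add_right (Nat.mul_le_mul hPcard this) 1
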